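/- arXiv:1109.0001 — 2 statements merged into one kernel-verified Lean document; each statement's English description precedes it below -/
import Mathlib

section
/- The truncated cube has no Hamiltonian vertex-face tour: there is no closed alternating sequence of vertices and faces (v_1, f_1, v_2, f_2, ..., v_k, f_k, v_1), visiting every face exactly once, such that consecutive vertices v_i, v_{i+1} are distinct and both incident to f_i. Indeed, any such tour would require each of the 8 triangular faces of the truncated cube to be separated by octagonal faces, but the 6 octagons admit at most a bounded number of tour-visits insufficient to accommodate all 8 triangles consecutively without two triangles being adjacent in the tour, which is impossible since no two triangles of the truncated cube share a vertex. -/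
/-- An abstract plane graph, given by its vertices, faces, the vertex set of each
face boundary, and the relation of two faces sharing an edge. -/
structure PlaneGraph where
  Vert : Type
  Face : Type
  vertFin : Fintype Vert
  faceFin : Fintype Face
  boundary : Face → Finset Vert
  shareEdge : Face → Face → Prop

attribute [instance] PlaneGraph.vertFin PlaneGraph.faceFin

namespace PlaneGraph

variable (G : PlaneGraph)

/-- The number of sides of a face. -/
def size (f : G.Face) : ℕ := (G.boundary f).card

/-- A face is triangular if it has exactly three vertices. -/
def Triangular (f : G.Face) : Prop := G.size f = 3

/-- A plane graph is tight if no two non-triangular faces share a vertex. -/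
def Tight : Prop :=
  ∀ f g : G.Face, f ≠ g → ¬ G.Triangular f → ¬ G.Triangular g →
    Disjoint (G.boundary f) (G.boundary g)

/-- One closed component `(v₁, f₁, v₂, f₂, …, v_k, f_k, v₁)` of a vertex-face tour:
consecutive vertices (cyclically) are distinct and both incident to the face between them. -/
def TourComp (c : List (G.Vert × G.Face)) : Prop :=
  c ≠ [] ∧ ∀ i : Fin c.length,
    (c.get i).1 ≠ (c.get ⟨((i : ℕ) + 1) % c.length, Nat.mod_lt _ i.pos⟩).1 ∧
    (c.get i).1 ∈ G.boundary (c.get i).2 ∧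
    (c.get ⟨((i : ℕ) + 1) % c.length, Nat.mod_lt _ i.pos⟩).1 ∈ G.boundary (c.get i).2

/-- A spanning vertex-face tour: a disjoint union of closed alternating vertex-face
sequences in which every face of `G` appears exactly once. -/
def SpanningTour (T : List (List (G.Vert × G.Face))) : Prop :=
  (∀ c ∈ T, G.TourComp c) ∧
  ∀ f : G.Face, ∃! i : Fin T.flatten.length, (T.flatten.get i).2 = f

/-- A Hamiltonian vertex-face tour is a connected (single-component) spanning tour. -/
def HamiltonianTour (c : List (G.Vert × G.Face)) : Prop := G.SpanningTour [c]

/-- The tour `T` contains the pattern `(v, f, v')`. -/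
def Contains (T : List (List (G.Vert × G.Face))) (v : G.Vert) (f : G.Face)
    (v' : G.Vert) : Prop :=
  ∃ c ∈ T, ∃ i : Fin c.length, c.get i = (v, f) ∧
    (c.get ⟨((i : ℕ) + 1) % c.length, Nat.mod_lt _ i.pos⟩).1 = v'

end PlaneGraph

/-- The truncated cube — a plane graph with 14 faces, of which 8 are
triangles and the rest are octagons, in which no two triangular faces share a
vertex — has no Hamiltonian vertex-face tour: in any such tour the faces flanking a
triangle would have to be octagons, and a cyclic sequence of 14 faces with 8
triangles, no two adjacent, is impossible since 8 > 6. -/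
theorem stmt_7 (G : PlaneGraph)
    (hfaces : Fintype.card G.Face = 14)
    (htris : {f : G.Face | G.Triangular f}.ncard = 8)
    (hocts : ∀ f : G.Face, ¬ G.Triangular f → G.size f = 8)
    (htridisj : ∀ f g : G.Face, G.Triangular f → G.Triangular g → f ≠ g →
      Disjoint (G.boundary f) (G.boundary g)) :
    ¬ ∃ c, G.HamiltonianTour c := by
  classical
  rintro ⟨c, hc⟩
  obtain ⟨hcomp, huniq⟩ := hc
  obtain ⟨hne, hstep⟩ : G.TourComp c := hcomp c (by simp)
  rw [show ([c] : List (List (G.Vert × G.Face))).flatten = c from by simp] at huniq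
  set F : Fin c.length → G.Face := fun i => (c.get i).2 with hF
  have hFinj : Function.Injective F := by
    intro i j hij
    obtain ⟨k, _, hk⟩ := huniq (F i)
    rw [hk i rfl, hk j hij.symm]
  have hFsurj : Function.Surjective F := fun f =>
    ⟨(huniq f).exists.choose, (huniq f).exists.choose_spec⟩
  have hn : c.length = 14 := by
    have := Fintype.card_congr (Equiv.ofBijective F ⟨hFinj, hFsurj⟩)
    simpa [hfaces] using this
  have hσlt : ∀ i : Fin c.length, ((i : ℕ) + 1) % c.length < c.length :=
    fun i => Nat.mod_lt _ i.pos
  set σ : Fin c.length → Fin c.length := fun i => ⟨((i : ℕ) + 1) % c.length, hσlt i⟩ with hσ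
  have hmod : ∀ a b : ℕ, a < c.length → b < c.length →
      (a + 1) % c.length = (b + 1) % c.length → a = b := by
    intro a b ha hb h
    rcases Nat.lt_or_ge (a + 1) c.length with h1 | h1
    · rw [Nat.mod_eq_of_lt h1] at h
      rcases Nat.lt_or_ge (b + 1) c.length with h2 | h2
      · rw [Nat.mod_eq_of_lt h2] at h; omega
      · have hb1 : b + 1 = c.length := by omega
        rw [hb1, Nat.mod_self] at h; omega
    · have ha1 : a + 1 = c.length := by omega
      rw [ha1, Nat.mod_self] at h
      rcases Nat.lt_or_ge (b + 1) c.length with h2 | h2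
      · rw [Nat.mod_eq_of_lt h2] at h; omega
      · omega
  have hshare : ∀ i : Fin c.length, (c.get (σ i)).1 ∈ G.boundary (F i) ∧
      (c.get (σ i)).1 ∈ G.boundary (F (σ i)) :=
    fun i => ⟨(hstep i).2.2, (hstep (σ i)).2.1⟩
  have hσne : ∀ i : Fin c.length, σ i ≠ i := by
    intro i h
    have h1 : ((i : ℕ) + 1) % c.length = (i : ℕ) := congrArg Fin.val h
    have h2 : (i : ℕ) < c.length := i.isLt
    rcases Nat.lt_or_ge ((i : ℕ) + 1) c.length with h3 | h3
    · rw [Nat.mod_eq_of_lt h3] at h1; omega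
    · have : (i : ℕ) + 1 = c.length := by omega
      rw [this, Nat.mod_self] at h1; omega
  have hnotboth : ∀ i : Fin c.length, G.Triangular (F i) → ¬ G.Triangular (F (σ i)) := by
    intro i h1 h2
    have hne' : F (σ i) ≠ F i := fun h => hσne i (hFinj h)
    have hd := htridisj _ _ h1 h2 hne'.symm
    obtain ⟨ha, hb⟩ := hshare i
    exact (Finset.disjoint_left.mp hd ha) hb
  set S : Finset (Fin c.length) := Finset.univ.filter (fun i => G.Triangular (F i)) with hS
  have hScard : S.card = 8 := by
    have h1 : {f : G.Face | G.Triangular f}.ncard = {f : G.Face | G.Triangular f}.toFinset.card :=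
      Set.ncard_eq_toFinset_card' _
    rw [htris] at h1
    have h2 : S.card = {f : G.Face | G.Triangular f}.toFinset.card := by
      apply Finset.card_bij (fun i _ => F i)
      · intro i hi
        simp only [Set.mem_toFinset, Set.mem_setOf_eq]
        exact (Finset.mem_filter.mp hi).2
      · intro i _ j _ h
        exact hFinj h
      · intro f hf
        obtain ⟨i, hi⟩ := hFsurj f
        refine ⟨i, ?_, hi⟩
        simp only [hS, Finset.mem_filter, Finset.mem_univ, true_and, hi]
        simpa [Set.mem_toFinset] using hf
    omega
  have hSccard : Sᶜ.card = 6 := by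
    have h := Finset.card_compl S
    simp only [Fintype.card_fin] at h
    omega
  have hmaps : ∀ i ∈ S, σ i ∈ Sᶜ := by
    intro i hi
    simp only [Finset.mem_compl, hS, Finset.mem_filter, Finset.mem_univ, true_and] at hi ⊢
    exact hnotboth i hi
  have hinjOn : Set.InjOn σ S := by
    intro i _ j _ h
    exact Fin.ext (hmod _ _ i.isLt j.isLt (congrArg Fin.val h))
  have := Finset.card_le_card_of_injOn σ hmaps hinjOn
  omega
end

section
/- The standard triangulation on n ≥ 4 vertices admits a Hamiltonian vertex-face tour: a closed alternating sequence of vertices and faces in which every face appears exactly once and consecutive vertices flanking each face are distinct vertices incident to that face. -/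
/-- A (combinatorial) triangulation of the sphere on vertex set `Fin n`: a collection
of triangles such that every edge lying on a triangle lies on exactly two triangles,
every vertex lies on a triangle, and the triangles are connected through shared
edges.  (Being a *sphere* triangulation is captured by Euler's formula, imposed as a
hypothesis where needed.) -/
structure SphereTriangulation (n : ℕ) where
  faces : Finset (Finset (Fin n))
  three : ∀ t ∈ faces, t.card = 3
  edge_two : ∀ e : Finset (Fin n), e.card = 2 → (∃ t ∈ faces, e ⊆ t) →
    (faces.filter fun t => e ⊆ t).card = 2
  spans : ∀ v : Fin n, ∃ t ∈ faces, v ∈ t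
  conn : ∀ t ∈ faces, ∀ t' ∈ faces,
    Relation.ReflTransGen (fun a b => a ∈ faces ∧ b ∈ faces ∧ (a ∩ b).card = 2) t t'

namespace SphereTriangulation

variable {n : ℕ}

/-- The number of edges of a triangulation. -/
def numEdges (T : SphereTriangulation n) : ℕ :=
  (Finset.univ.filter fun e : Finset (Fin n) => e.card = 2 ∧ ∃ t ∈ T.faces, e ⊆ t).card

/-- A diagonal flip: the edge `uv`, shared by the faces `uvx` and `uvy` where `x` and
`y` are non-adjacent, is replaced by the edge `xy`, replacing the faces `uvx, uvy`
by `xyu, xyv`. -/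
def DiagonalFlip (T T' : SphereTriangulation n) : Prop :=
  ∃ u v x y : Fin n, u ≠ v ∧ x ≠ y ∧
    ({u, v, x} : Finset (Fin n)) ∈ T.faces ∧ ({u, v, y} : Finset (Fin n)) ∈ T.faces ∧
    (¬ ∃ t ∈ T.faces, x ∈ t ∧ y ∈ t) ∧
    T'.faces = (T.faces \ {{u, v, x}, {u, v, y}}) ∪ {{x, y, u}, {x, y, v}}

/-- The standard triangulation on `n ≥ 4` vertices: two hubs `0` and `1` joined to the
path `2, 3, …, n-1`; its faces are `{0,i,i+1}` and `{1,i,i+1}` for `2 ≤ i ≤ n-2`,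
together with the two faces `{0,1,2}` and `{0,1,n-1}` containing the hub edge. -/
def IsStandard (T : SphereTriangulation n) : Prop :=
  ∃ _hn : 4 ≤ n, ∀ t : Finset (Fin n), t ∈ T.faces ↔
    ((∃ i j : Fin n, 2 ≤ (i : ℕ) ∧ (j : ℕ) = (i : ℕ) + 1 ∧
        (t = {⟨0, by omega⟩, i, j} ∨ t = {⟨1, by omega⟩, i, j})) ∨
      t = {⟨0, by omega⟩, ⟨1, by omega⟩, ⟨2, by omega⟩} ∨
      t = {⟨0, by omega⟩, ⟨1, by omega⟩, ⟨n - 1, by omega⟩})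

/-- One closed component of a vertex-face tour of a triangulation. -/
def TourComp (T : SphereTriangulation n) (c : List (Fin n × Finset (Fin n))) : Prop :=
  c ≠ [] ∧ ∀ i : Fin c.length,
    (c.get i).2 ∈ T.faces ∧
    (c.get i).1 ≠ (c.get ⟨((i : ℕ) + 1) % c.length, Nat.mod_lt _ i.pos⟩).1 ∧
    (c.get i).1 ∈ (c.get i).2 ∧
    (c.get ⟨((i : ℕ) + 1) % c.length, Nat.mod_lt _ i.pos⟩).1 ∈ (c.get i).2

/-- A spanning vertex-face tour of a triangulation: a disjoint union of closed
alternating vertex-face sequences in which every face appears exactly once. -/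
def SpanningTour (T : SphereTriangulation n)
    (S : List (List (Fin n × Finset (Fin n)))) : Prop :=
  (∀ c ∈ S, T.TourComp c) ∧
  ∀ f ∈ T.faces, ∃! i : Fin S.flatten.length, (S.flatten.get i).2 = f

/-- A Hamiltonian vertex-face tour is a connected (single-component) spanning tour. -/
def HamiltonianTour (T : SphereTriangulation n)
    (c : List (Fin n × Finset (Fin n))) : Prop :=
  T.SpanningTour [c]

end SphereTriangulation

def stdE (n : ℕ) (hn : 0 < n) (a : ℕ) : Fin n := ⟨a % n, Nat.mod_lt a hn⟩

lemma stdE_val {n : ℕ} (hn : 0 < n) {a : ℕ} (ha : a < n) : (stdE n hn a : ℕ) = a :=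
  Nat.mod_eq_of_lt ha

lemma stdE_inj {n : ℕ} (hn : 0 < n) {a b : ℕ} (ha : a < n) (hb : b < n) :
    stdE n hn a = stdE n hn b ↔ a = b := by
  simp [stdE, Fin.ext_iff, Nat.mod_eq_of_lt ha, Nat.mod_eq_of_lt hb]

def stdVtx (n j : ℕ) : ℕ :=
  if j = 0 then 0 else if j ≤ n-3 then j+2 else if j = n-2 then 1 else 2*n-3-j

def stdFace (n j : ℕ) : ℕ × ℕ × ℕ :=
  if j ≤ n-4 then (0, j+2, j+3) else if j = n-3 then (0,1,n-1)
  else if j ≤ 2*n-6 then (1, 2*n-4-j, 2*n-3-j) else (0,1,2)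

lemma stdFace_sorted {n j : ℕ} (hn : 4 ≤ n) (hj : j < 2*n-4) :
    (stdFace n j).1 < (stdFace n j).2.1 ∧ (stdFace n j).2.1 < (stdFace n j).2.2 ∧
      (stdFace n j).2.2 < n := by
  unfold stdFace; split_ifs <;> dsimp only <;> first | exact absurd (by assumption) not_false | omega

lemma stdVtx_lt {n j : ℕ} (hn : 4 ≤ n) (hj : j < 2*n-4) : stdVtx n j < n := by
  unfold stdVtx; split_ifs <;> omega

lemma stdVtx_mem {n j : ℕ} (hn : 4 ≤ n) (hj : j < 2*n-4) :
    stdVtx n j = (stdFace n j).1 ∨ stdVtx n j = (stdFace n j).2.1 ∨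
      stdVtx n j = (stdFace n j).2.2 := by
  unfold stdVtx stdFace; split_ifs <;> dsimp only <;> first | exact absurd (by assumption) not_false | omega

lemma stdVtx_next {n j : ℕ} (hn : 4 ≤ n) (hj : j < 2*n-4) :
    (stdVtx n ((j+1) % (2*n-4)) = (stdFace n j).1 ∨
     stdVtx n ((j+1) % (2*n-4)) = (stdFace n j).2.1 ∨
     stdVtx n ((j+1) % (2*n-4)) = (stdFace n j).2.2) ∧
    stdVtx n ((j+1) % (2*n-4)) ≠ stdVtx n j := by
  have hk : ((j+1) % (2*n-4) = j+1 ∧ j+1 < 2*n-4) ∨ ((j+1) % (2*n-4) = 0 ∧ j = 2*n-5) := by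
    rcases Nat.lt_or_ge (j+1) (2*n-4) with h | h
    · exact Or.inl ⟨Nat.mod_eq_of_lt h, h⟩
    · have : j + 1 = 2*n-4 := by omega
      right; rw [this, Nat.mod_self]; omega
  rcases hk with ⟨hk, hlt⟩ | ⟨hk, hj'⟩ <;> rw [hk]
  · unfold stdVtx stdFace
    split_ifs <;> dsimp only <;> first | exact absurd (by assumption) not_false | omega
  · unfold stdVtx stdFace
    split_ifs <;> dsimp only <;> first | exact absurd (by assumption) not_false | omega

lemma stdFace_injN {n j j' : ℕ} (hn : 4 ≤ n) (hj : j < 2*n-4) (hj' : j' < 2*n-4)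
    (h1 : (stdFace n j).1 = (stdFace n j').1) (h2 : (stdFace n j).2.1 = (stdFace n j').2.1)
    (h3 : (stdFace n j).2.2 = (stdFace n j').2.2) : j = j' := by
  unfold stdFace at *; split_ifs at * <;> simp_all <;> omega

lemma triple_inj {n : ℕ} (hn : 0 < n) {a b c a' b' c' : ℕ}
    (ha : a < n) (hb : b < n) (hc : c < n) (ha' : a' < n) (hb' : b' < n) (hc' : c' < n)
    (hs1 : a < b) (hs2 : b < c) (hs1' : a' < b') (hs2' : b' < c')
    (h : ({stdE n hn a, stdE n hn b, stdE n hn c} : Finset (Fin n)) =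
      {stdE n hn a', stdE n hn b', stdE n hn c'}) :
    a = a' ∧ b = b' ∧ c = c' := by
  have key := Finset.ext_iff.mp h
  have k1 := key (stdE n hn a)
  have k2 := key (stdE n hn b)
  have k3 := key (stdE n hn c)
  simp only [Finset.mem_insert, Finset.mem_singleton, stdE_inj hn ha ha', stdE_inj hn ha hb',
    stdE_inj hn ha hc', stdE_inj hn hb ha', stdE_inj hn hb hb', stdE_inj hn hb hc',
    stdE_inj hn hc ha', stdE_inj hn hc hb', stdE_inj hn hc hc', true_or, or_true,
    true_iff] at k1 k2 k3
  omega

def stdFS (n : ℕ) (h0 : 0 < n) (j : ℕ) : Finset (Fin n) :=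
  {stdE n h0 (stdFace n j).1, stdE n h0 (stdFace n j).2.1, stdE n h0 (stdFace n j).2.2}

lemma stdFS_inj {n : ℕ} (hn : 4 ≤ n) (h0 : 0 < n) {a b : ℕ} (ha : a < 2*n-4)
    (hb : b < 2*n-4) (hab : stdFS n h0 a = stdFS n h0 b) : a = b := by
  obtain ⟨s1, s2, s3⟩ := stdFace_sorted hn ha
  obtain ⟨t1, t2, t3⟩ := stdFace_sorted hn hb
  have := triple_inj h0 (by omega) (by omega) s3 (by omega) (by omega) t3 s1 s2 t1 t2 hab
  exact stdFace_injN hn ha hb this.1 this.2.1 this.2.2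

lemma stdE_mk {n : ℕ} (h0 : 0 < n) {a : ℕ} (ha : a < n) : stdE n h0 a = ⟨a, ha⟩ :=
  Fin.ext (stdE_val h0 ha)

/-- The standard triangulation on `n ≥ 4` vertices admits a
Hamiltonian vertex-face tour: a single closed alternating sequence of vertices and
faces in which every face appears exactly once and consecutive vertices flanking each
face are distinct vertices incident to that face. -/
theorem stmt_10 (n : ℕ) (hn : 4 ≤ n) (T : SphereTriangulation n)
    (hstd : T.IsStandard) :
    ∃ c : List (Fin n × Finset (Fin n)), T.HamiltonianTour c := by
  obtain ⟨hn4, hiff⟩ := hstd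
  have h0 : 0 < n := by omega
  -- membership of the standard faces
  have hmem : ∀ j, j < 2*n-4 → stdFS n h0 j ∈ T.faces := by
    intro j hj
    rw [hiff]
    have hcase : j ≤ n-4 ∨ j = n-3 ∨ (¬ j ≤ n-4 ∧ j ≠ n-3 ∧ j ≤ 2*n-6) ∨
        (¬ j ≤ n-4 ∧ j ≠ n-3 ∧ ¬ j ≤ 2*n-6) := by omega
    rcases hcase with h | h | ⟨h1, h2, h3⟩ | ⟨h1, h2, h3⟩
    · have hf : stdFace n j = (0, j+2, j+3) := by unfold stdFace; rw [if_pos h]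
      left
      refine ⟨stdE n h0 (j+2), stdE n h0 (j+3), ?_, ?_, Or.inl ?_⟩
      · rw [stdE_val h0 (by omega)]; omega
      · rw [stdE_val h0 (by omega), stdE_val h0 (by omega)]
      · unfold stdFS
        rw [hf, stdE_mk h0 (show 0 < n by omega)]
    · have hf : stdFace n j = (0, 1, n-1) := by
        unfold stdFace; rw [if_neg (by omega), if_pos h]
      right; right
      unfold stdFS
      rw [hf, stdE_mk h0 (show 0 < n by omega), stdE_mk h0 (show 1 < n by omega),
        stdE_mk h0 (show n-1 < n by omega)]
    · have hf : stdFace n j = (1, 2*n-4-j, 2*n-3-j) := by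
        unfold stdFace; rw [if_neg h1, if_neg h2, if_pos h3]
      left
      refine ⟨stdE n h0 (2*n-4-j), stdE n h0 (2*n-3-j), ?_, ?_, Or.inr ?_⟩
      · rw [stdE_val h0 (by omega)]; omega
      · rw [stdE_val h0 (by omega), stdE_val h0 (by omega)]; omega
      · unfold stdFS
        rw [hf, stdE_mk h0 (show 1 < n by omega)]
    · have hf : stdFace n j = (0, 1, 2) := by
        unfold stdFace; rw [if_neg h1, if_neg h2, if_neg h3]
      right; left
      unfold stdFS
      rw [hf, stdE_mk h0 (show 0 < n by omega), stdE_mk h0 (show 1 < n by omega),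
        stdE_mk h0 (show 2 < n by omega)]
  refine ⟨(List.range (2*n-4)).map (fun j => (stdE n h0 (stdVtx n j), stdFS n h0 j)), ?_, ?_⟩
  · -- every component is a tour component
    intro c' hc'
    simp only [List.mem_singleton] at hc'
    subst hc'
    constructor
    · simp only [ne_eq, List.map_eq_nil_iff, List.range_eq_nil]
      omega
    · intro i
      obtain ⟨k, hk⟩ := i
      simp only [List.length_map, List.length_range] at hk
      have hget : ∀ (m : ℕ) (hm : m < ((List.range (2*n-4)).map
          (fun j => (stdE n h0 (stdVtx n j), stdFS n h0 j))).length),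
          ((List.range (2*n-4)).map (fun j => (stdE n h0 (stdVtx n j), stdFS n h0 j))).get ⟨m, hm⟩
            = (stdE n h0 (stdVtx n m), stdFS n h0 m) := by
        intro m hm
        simp only [List.get_eq_getElem, List.getElem_map, List.getElem_range]
      rw [hget, hget]
      simp only [List.length_map, List.length_range]
      have hmod : (k+1) % (2*n-4) < 2*n-4 := Nat.mod_lt _ (by omega)
      refine ⟨hmem k hk, ?_, ?_, ?_⟩
      · intro hEq
        rw [stdE_inj h0 (stdVtx_lt hn hk) (stdVtx_lt hn hmod)] at hEq
        exact (stdVtx_next hn hk).2 hEq.symm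
      · rcases stdVtx_mem hn hk with h | h | h <;> rw [h] <;> unfold stdFS <;> simp
      · rcases (stdVtx_next hn hk).1 with h | h | h <;> rw [h] <;> unfold stdFS <;> simp
  · -- every face appears exactly once
    intro f hf
    simp only [List.flatten_cons, List.flatten_nil] at *
    have hlen : (((List.range (2*n-4)).map
        (fun j => (stdE n h0 (stdVtx n j), stdFS n h0 j))) ++ []).length = 2*n-4 := by simp
    have hget : ∀ (m : ℕ) (hm : m < (((List.range (2*n-4)).map
        (fun j => (stdE n h0 (stdVtx n j), stdFS n h0 j))) ++ []).length),
        (((List.range (2*n-4)).map (fun j => (stdE n h0 (stdVtx n j), stdFS n h0 j))) ++ []).get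
          ⟨m, hm⟩ = (stdE n h0 (stdVtx n m), stdFS n h0 m) := by
      intro m hm
      have hm' : m < 2*n-4 := by simpa using hm
      simp [List.get_eq_getElem, List.getElem_append, hm']
    have hsurj : ∃ j₀, j₀ < 2*n-4 ∧ stdFS n h0 j₀ = f := by
      rw [hiff] at hf
      rcases hf with ⟨i, jj, h2i, hji, hf | hf⟩ | hf | hf
      · have hib : (i : ℕ) + 1 < n := by rw [← hji]; exact jj.isLt
        have hei : stdE n h0 (i : ℕ) = i := Fin.ext (stdE_val h0 i.isLt)
        have hej : stdE n h0 ((i : ℕ) + 1) = jj := by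
          apply Fin.ext
          rw [stdE_val h0 hib]
          omega
        refine ⟨(i : ℕ) - 2, by omega, ?_⟩
        have hface : stdFace n ((i : ℕ) - 2) = (0, (i : ℕ), (i : ℕ) + 1) := by
          unfold stdFace
          rw [if_pos (by omega)]
          simp only [Prod.mk.injEq, true_and, and_true]
          omega
        unfold stdFS
        rw [hface, hf, stdE_mk h0 (show 0 < n by omega)]
        dsimp only
        rw [hei, hej]
      · have hib : (i : ℕ) + 1 < n := by rw [← hji]; exact jj.isLt
        have hei : stdE n h0 (i : ℕ) = i := Fin.ext (stdE_val h0 i.isLt)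
        have hej : stdE n h0 ((i : ℕ) + 1) = jj := by
          apply Fin.ext
          rw [stdE_val h0 hib]
          omega
        refine ⟨2*n-4-(i : ℕ), by omega, ?_⟩
        have hface : stdFace n (2*n-4-(i : ℕ)) = (1, (i : ℕ), (i : ℕ) + 1) := by
          unfold stdFace
          rw [if_neg (by omega), if_neg (by omega), if_pos (by omega)]
          simp only [Prod.mk.injEq, true_and, and_true]
          omega
        unfold stdFS
        rw [hface, hf, stdE_mk h0 (show 1 < n by omega)]
        dsimp only
        rw [hei, hej]
      · refine ⟨2*n-5, by omega, ?_⟩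
        have hface : stdFace n (2*n-5) = (0, 1, 2) := by
          unfold stdFace
          rw [if_neg (by omega), if_neg (by omega), if_neg (by omega)]
        unfold stdFS
        rw [hface, hf, stdE_mk h0 (show 0 < n by omega), stdE_mk h0 (show 1 < n by omega),
          stdE_mk h0 (show 2 < n by omega)]
      · refine ⟨n-3, by omega, ?_⟩
        have hface : stdFace n (n-3) = (0, 1, n-1) := by
          unfold stdFace
          rw [if_neg (by omega), if_pos rfl]
        unfold stdFS
        rw [hface, hf, stdE_mk h0 (show 0 < n by omega), stdE_mk h0 (show 1 < n by omega),
          stdE_mk h0 (show n-1 < n by omega)]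
    obtain ⟨j₀, hj₀, hFSj⟩ := hsurj
    refine ⟨⟨j₀, by rw [hlen]; exact hj₀⟩, ?_, ?_⟩
    · simp only [hget]
      exact hFSj
    · rintro ⟨k, hk⟩ hk2
      simp only [hget] at hk2
      have hk' : k < 2*n-4 := by rw [hlen] at hk; exact hk
      have : k = j₀ := stdFS_inj hn h0 hk' hj₀ (by rw [hk2, hFSj])
      exact Fin.ext this
end
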